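/- Let M = M₁ ×_f M₂ be a warped product of semi-Riemannian manifolds with metric g = g₁ + f²g₂, and let W = W₁ + W₂ be a 2-Killing vector field on M with W_i tangent to M_i. Then (M₂, g₂, W₂, λ) is a second Ricci soliton if and only if Ric₂ − (2/f²) W₁(f²) 𝓛_{W₂}g₂ = ( λ + W₁(W₁(f²))/f² ) g₂; in particular (M₂, g₂) is then an h-almost Ricci soliton with h = −4 W₁(ln f). -/

import Mathlib

/-!
STATEMENT 14. Let `M = M₁ ×_f M₂` be a warped product of semi-Riemannian
manifolds with metric `g = g₁ + f²g₂`, and let `W = W₁ + W₂` be a 2-Killing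
vector field on `M` (`𝓛_W 𝓛_W g = 0`) with `Wᵢ` tangent to `Mᵢ`.  Then
`(M₂, g₂, W₂, λ)` is a second Ricci soliton
(`𝓛_{W₂}𝓛_{W₂}g₂ + Ric₂ = λ g₂`) if and only if
`Ric₂ − (2/f²) W₁(f²) 𝓛_{W₂}g₂ = (λ + W₁(W₁(f²))/f²) g₂`;
in particular `(M₂, g₂)` is then an `h`-almost Ricci soliton with
`h = −4 W₁(ln f)` (note `(2/f²)W₁(f²) = 4W₁(ln f)`).

The 2-Killing condition is expressed through the decomposition
`(𝓛_W𝓛_W g)(U,V) = (𝓛_{W₁}𝓛_{W₁}g₁)(U₁,V₁) + f²(𝓛_{W₂}𝓛_{W₂}g₂)(U₂,V₂)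
  + 2W₁(f²)(𝓛_{W₂}g₂)(U₂,V₂) + W₁(W₁(f²)) g₂(U₂,V₂)`.
-/

open Manifold

noncomputable section

lemma mfderiv_real_comp' {E : Type*} [NormedAddCommGroup E] [NormedSpace ℝ E]
    {H : Type*} [TopologicalSpace H] {I : ModelWithCorners ℝ E H}
    {M : Type*} [TopologicalSpace M] [ChartedSpace H M]
    [IsManifold I (⊤ : ℕ∞) M]
    (g : ℝ → ℝ) (f : M → ℝ) (x : M) (hg : DifferentiableAt ℝ g (f x))
    (hf : MDifferentiableAt I 𝓘(ℝ, ℝ) f x) (v : TangentSpace I x) :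
    (show ℝ from mfderiv I 𝓘(ℝ, ℝ) (fun y => g (f y)) x v)
      = deriv g (f x) * (show ℝ from mfderiv I 𝓘(ℝ, ℝ) f x v) := by
  have h1 : mfderiv I 𝓘(ℝ, ℝ) (fun y => g (f y)) x
      = (mfderiv 𝓘(ℝ, ℝ) 𝓘(ℝ, ℝ) g (f x)).comp (mfderiv I 𝓘(ℝ, ℝ) f x) :=
    mfderiv_comp x hg.mdifferentiableAt hf
  have h2 : mfderiv 𝓘(ℝ, ℝ) 𝓘(ℝ, ℝ) g (f x) = fderiv ℝ g (f x) := mfderiv_eq_fderiv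
  rw [h1]
  simp only [ContinuousLinearMap.comp_apply, h2]
  have h4 : ∀ w : ℝ, (fderiv ℝ g (f x)) w = deriv g (f x) * w := by
    intro w
    have : (fderiv ℝ g (f x)) w = w • (fderiv ℝ g (f x)) 1 := by
      rw [← map_smul, smul_eq_mul, mul_one]
    rw [this, smul_eq_mul, fderiv_apply_one_eq_deriv, mul_comm]
  exact h4 _


theorem warped_product_two_killing_second_factor_soliton_iff
    -- the base (M₁, g₁)
    {E₁ : Type*} [NormedAddCommGroup E₁] [NormedSpace ℝ E₁]
    {H₁ : Type*} [TopologicalSpace H₁] {I₁ : ModelWithCorners ℝ E₁ H₁}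
    {M₁ : Type*} [TopologicalSpace M₁] [ChartedSpace H₁ M₁]
    [IsManifold I₁ (⊤ : ℕ∞) M₁] [Nonempty M₁]
    -- the fibre (M₂, g₂)
    {E₂ : Type*} [NormedAddCommGroup E₂] [NormedSpace ℝ E₂]
    {H₂ : Type*} [TopologicalSpace H₂] {I₂ : ModelWithCorners ℝ E₂ H₂}
    {M₂ : Type*} [TopologicalSpace M₂] [ChartedSpace H₂ M₂]
    [IsManifold I₂ (⊤ : ℕ∞) M₂]
    -- the warping function `f : M₁ → ℝ⁺`
    (f : M₁ → ℝ) (hf_pos : ∀ x, 0 < f x) (hf : ContMDiff I₁ 𝓘(ℝ, ℝ) (⊤ : ℕ∞) f)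
    -- metrics, Ricci curvature of `g₂`, and (iterated) Lie derivative tensors
    (g₁ LL₁ : ∀ x : M₁, TangentSpace I₁ x → TangentSpace I₁ x → ℝ)
    (g₂ Ric₂ LWg₂ LL₂ : ∀ y : M₂, TangentSpace I₂ y → TangentSpace I₂ y → ℝ)
    -- `Wᵢ` tangent to `Mᵢ`
    (W₁ : ∀ x : M₁, TangentSpace I₁ x) (W₂ : ∀ y : M₂, TangentSpace I₂ y)
    -- `W₁(f²)`, `W₁(W₁(f²))` and `W₁(ln f)` on `M₁`
    (W1f2 W1W1f2 W1lnf : M₁ → ℝ)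
    (hW1f2 : ∀ x, W1f2 x =
      (show ℝ from mfderiv I₁ 𝓘(ℝ, ℝ) (fun y => (f y) ^ 2) x (W₁ x)))
    (hW1W1f2 : ∀ x, W1W1f2 x =
      (show ℝ from mfderiv I₁ 𝓘(ℝ, ℝ) W1f2 x (W₁ x)))
    (hW1lnf : ∀ x, W1lnf x =
      (show ℝ from mfderiv I₁ 𝓘(ℝ, ℝ) (fun y => Real.log (f y)) x (W₁ x)))
    -- the tensor `LL₁` is bilinear, in particular it vanishes on zero vectors
    (hLL₁_zero : ∀ x : M₁, LL₁ x 0 0 = 0)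
    (lambda : ℝ)
    -- `W = W₁ + W₂` is 2-Killing on `M₁ ×_f M₂`: `𝓛_W 𝓛_W g = 0`, expressed
    -- through the warped-product decomposition of `𝓛_W 𝓛_W g`
    (h2Killing : ∀ (x : M₁) (y : M₂) (u₁ v₁ : TangentSpace I₁ x)
      (u₂ v₂ : TangentSpace I₂ y),
      LL₁ x u₁ v₁ + (f x) ^ 2 * LL₂ y u₂ v₂ + 2 * W1f2 x * LWg₂ y u₂ v₂
        + W1W1f2 x * g₂ y u₂ v₂ = 0) :
    -- `(M₂, g₂, W₂, λ)` is a second Ricci soliton iff the stated equation holds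
    ((∀ (y : M₂) (u v : TangentSpace I₂ y),
        LL₂ y u v + Ric₂ y u v = lambda * g₂ y u v) ↔
      ∀ (x : M₁) (y : M₂) (u v : TangentSpace I₂ y),
        Ric₂ y u v - (2 / (f x) ^ 2) * W1f2 x * LWg₂ y u v
          = (lambda + W1W1f2 x / (f x) ^ 2) * g₂ y u v) ∧
    -- in particular `(M₂, g₂)` is then an `h`-almost Ricci soliton with `h = −4W₁(ln f)`
    ((∀ (y : M₂) (u v : TangentSpace I₂ y),
        LL₂ y u v + Ric₂ y u v = lambda * g₂ y u v) →
      ∀ (x : M₁) (y : M₂) (u v : TangentSpace I₂ y),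
        (-(4 * W1lnf x)) * LWg₂ y u v + Ric₂ y u v
          = (lambda + W1W1f2 x / (f x) ^ 2) * g₂ y u v) := by
  
  have hf2 : ∀ x, (f x) ^ 2 ≠ 0 := fun x => pow_ne_zero 2 (hf_pos x).ne'
  have hK : ∀ (x : M₁) (y : M₂) (u v : TangentSpace I₂ y),
      (f x) ^ 2 * LL₂ y u v + 2 * W1f2 x * LWg₂ y u v
        + W1W1f2 x * g₂ y u v = 0 := by
    intro x y u v
    have h := h2Killing x y 0 0 u v
    rw [hLL₁_zero x] at h
    linarith
  -- derivative identity: (2/f²) W1f2 = 4 W1lnf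
  have hid : ∀ x, 2 / (f x) ^ 2 * W1f2 x = 4 * W1lnf x := by
    intro x
    have hfd : MDifferentiableAt I₁ 𝓘(ℝ, ℝ) f x := (hf.mdifferentiable (by simp)) x
    have e1 : W1f2 x = 2 * f x * (show ℝ from mfderiv I₁ 𝓘(ℝ, ℝ) f x (W₁ x)) := by
      rw [hW1f2 x, mfderiv_real_comp' (fun t : ℝ => t ^ 2) f x (by fun_prop) hfd]
      simp [deriv_pow]
    have e2 : W1lnf x = (f x)⁻¹ * (show ℝ from mfderiv I₁ 𝓘(ℝ, ℝ) f x (W₁ x)) := by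
      rw [hW1lnf x, mfderiv_real_comp' Real.log f x
        (Real.differentiableAt_log (hf_pos x).ne') hfd]
      rw [Real.deriv_log]
    rw [e1, e2]
    have := hf_pos x
    field_simp
    have h4 : ∀ t : ℝ, (2 : ℝ) ^ 2 * t = t * 4 := fun t => by ring
    exact h4 _
  have hmp : (∀ (y : M₂) (u v : TangentSpace I₂ y),
        LL₂ y u v + Ric₂ y u v = lambda * g₂ y u v) →
      ∀ (x : M₁) (y : M₂) (u v : TangentSpace I₂ y),
        Ric₂ y u v - (2 / (f x) ^ 2) * W1f2 x * LWg₂ y u v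
          = (lambda + W1W1f2 x / (f x) ^ 2) * g₂ y u v := by
    intro hs x y u v
    have h := hK x y u v
    have h2 := hs y u v
    have hfx := hf2 x
    have hfx0 : f x ≠ 0 := (hf_pos x).ne'
    field_simp
    linear_combination (f x) ^ 2 * h2 - h
  refine ⟨⟨hmp, ?_⟩, ?_⟩
  · intro he y u v
    obtain x₀ := Classical.arbitrary M₁
    have h := hK x₀ y u v
    have h2 := he x₀ y u v
    have hfx := hf2 x₀
    have hfx0 : f x₀ ≠ 0 := (hf_pos x₀).ne'
    field_simp at h2
    have key : (f x₀) ^ 2 * (LL₂ y u v + Ric₂ y u v - lambda * g₂ y u v) = 0 := by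
      linear_combination h + h2
    rcases mul_eq_zero.mp key with h' | h'
    · exact absurd h' hfx
    · linarith
  · intro hs x y u v
    have h2 := hmp hs x y u v
    have hid' := hid x
    linear_combination h2 + LWg₂ y u v * hid'
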